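/- Suppose D is a distribution over a finite set X × {0,1} whose regression function η_D takes at least two distinct values below 1/2 on sets of positive probability (i.e., |range(η_D) ∩ [0, 1/2)| ≥ 2). Then there exists a predictor f differing from η_D on a set of positive probability that is both perfectly calibrated and admits a threshold θ for which f_θ achieves the Bayes 0/1-loss. -/

import Mathlib

open Finset

noncomputable def lmass {n : ℕ} (μ f : Fin n → ℝ) (r : ℝ) : ℝ :=
  ∑ x ∈ univ.filter (fun x => f x = r), μ x

noncomputable def lavg {n : ℕ} (μ η f : Fin n → ℝ) (r : ℝ) : ℝ :=
  (∑ x ∈ univ.filter (fun x => f x = r), μ x * η x) / lmass μ f r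

/-- `f` is calibrated w.r.t. marginal `μ` and regression function `η`:
on the support, `f x` equals the conditional label expectation on its level set. -/
def Calibrated {n : ℕ} (μ η f : Fin n → ℝ) : Prop :=
  ∀ x, 0 < μ x → f x = lavg μ η f (f x)

/-- expected 0/1-loss of a classifier `h` under marginal `μ` and regression function `η`. -/
noncomputable def loss01 {n : ℕ} (μ η : Fin n → ℝ) (h : Fin n → Bool) : ℝ :=
  ∑ x, μ x * (if h x then (1 - η x) else η x)

/-- thresholded classifier `f_θ`. -/
noncomputable def thresh {n : ℕ} (f : Fin n → ℝ) (θ : ℝ) : Fin n → Bool :=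
  fun x => decide (θ ≤ f x)

/-- collision probability `Pr_{x,x' iid ~ μ}[f x = f x']`. -/
noncomputable def collision {n : ℕ} (μ f : Fin n → ℝ) : ℝ :=
  ∑ x, ∑ x', if f x = f x' then μ x * μ x' else 0

/-- probabilistic count. -/
noncomputable def pcount {n : ℕ} (μ f : Fin n → ℝ) : ℝ := 1 / collision μ f

/-- `p`-th power of the L_p expected calibration error. -/
noncomputable def cepPow {n : ℕ} (p : ℕ) (μ η f : Fin n → ℝ) : ℝ :=
  ∑ x, μ x * |f x - lavg μ η f (f x)| ^ p

/-- mean squared error `E[(y - f x)^2]`. -/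
noncomputable def mse {n : ℕ} (μ η f : Fin n → ℝ) : ℝ :=
  ∑ x, μ x * (η x * (1 - f x) ^ 2 + (1 - η x) * (f x) ^ 2)

/-- average label assignment. -/
noncomputable def fbar {n : ℕ} (μ η f : Fin n → ℝ) : Fin n → ℝ :=
  fun x => lavg μ η f (f x)

/-- strict monotonicity of `f` w.r.t. `η` on the support of `μ`. -/
def StrictMonoWrt {n : ℕ} (μ η f : Fin n → ℝ) : Prop :=
  ∀ x x', 0 < μ x → 0 < μ x' →
    0 ≤ (η x - η x') * (f x - f x') ∧
      ((η x - η x') * (f x - f x') = 0 → η x = η x')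

theorem stmt2 {n : ℕ} (μ η : Fin n → ℝ)
    (hμ0 : ∀ x, 0 ≤ μ x) (hμ1 : (∑ x, μ x) = 1)
    (hη : ∀ x, η x ∈ Set.Icc (0:ℝ) 1)
    (a b : ℝ) (hab : a ≠ b) (ha : a < 1 / 2) (hb : b < 1 / 2)
    (hxa : ∃ x, 0 < μ x ∧ η x = a) (hxb : ∃ x, 0 < μ x ∧ η x = b) :
    ∃ f : Fin n → ℝ,
      (∃ x, 0 < μ x ∧ f x ≠ η x) ∧
      Calibrated μ η f ∧
      (∃ θ : ℝ, ∀ h : Fin n → Bool, loss01 μ η (thresh f θ) ≤ loss01 μ η h) := by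
  classical
  obtain ⟨xa, hxa1, hxa2⟩ := hxa
  obtain ⟨xb, hxb1, hxb2⟩ := hxb
  set S : Finset (Fin n) := univ.filter (fun x => η x = a ∨ η x = b) with hS
  have hxaS : xa ∈ S := by simp [hS, hxa2]
  set m : ℝ := ∑ x ∈ S, μ x with hmdef
  have hm : 0 < m := by
    have h1 := Finset.single_le_sum (f := μ) (fun i _ => hμ0 i) hxaS
    linarith
  set c : ℝ := (∑ x ∈ S, μ x * η x) / m with hc
  have hcm : ∑ x ∈ S, μ x * η x = c * m := by
    rw [hc]; field_simp
  have hcmax : c ≤ max a b := by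
    rw [hc, div_le_iff₀ hm]
    calc ∑ x ∈ S, μ x * η x ≤ ∑ x ∈ S, μ x * max a b := by
          apply Finset.sum_le_sum
          intro x hx
          have hx' : η x = a ∨ η x = b := by simpa [hS] using hx
          rcases hx' with h | h
          · exact mul_le_mul_of_nonneg_left (h ▸ le_max_left a b) (hμ0 x)
          · exact mul_le_mul_of_nonneg_left (h ▸ le_max_right a b) (hμ0 x)
      _ = max a b * m := by rw [← Finset.sum_mul, hmdef]; ring
  have hchalf : c < 1/2 := lt_of_le_of_lt hcmax (max_lt ha hb)
  -- c ≠ a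
  have hSab : S = (univ.filter (fun x => η x = a)) ∪ (univ.filter (fun x => η x = b)) := by
    ext x; simp [hS]
  have hdisj : Disjoint (univ.filter (fun x : Fin n => η x = a))
      (univ.filter (fun x => η x = b)) := by
    rw [Finset.disjoint_left]
    intro x hx hx'
    simp only [Finset.mem_filter] at hx hx'
    exact hab (hx.2 ▸ hx'.2 ▸ rfl)
  have hmb : 0 < ∑ x ∈ univ.filter (fun x => η x = b), μ x := by
    have hxbmem : xb ∈ univ.filter (fun x => η x = b) := by simp [hxb2]
    have h1 := Finset.single_le_sum (f := μ) (fun i _ => hμ0 i) hxbmem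
    linarith
  have hca : c ≠ a := by
    intro hce
    have h1 : ∑ x ∈ S, μ x * (η x - a) = (c - a) * m := by
      have : ∀ x ∈ S, μ x * (η x - a) = μ x * η x - a * μ x := fun x _ => by ring
      rw [Finset.sum_congr rfl this, Finset.sum_sub_distrib, hcm, ← Finset.mul_sum, ← hmdef]
      ring
    have h2 : ∑ x ∈ S, μ x * (η x - a)
        = (b - a) * ∑ x ∈ univ.filter (fun x => η x = b), μ x := by
      rw [hSab, Finset.sum_union hdisj]
      have ha0 : ∑ x ∈ univ.filter (fun x => η x = a), μ x * (η x - a) = 0 :=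
        Finset.sum_eq_zero (by
          intro x hx
          simp only [Finset.mem_filter] at hx
          rw [hx.2]; ring)
      rw [ha0, zero_add, Finset.mul_sum]
      apply Finset.sum_congr rfl
      intro x hx
      simp only [Finset.mem_filter] at hx
      rw [hx.2]; ring
    have h3 : (c - a) * m = (b - a) * ∑ x ∈ univ.filter (fun x => η x = b), μ x :=
      h1.symm.trans h2
    rw [hce, sub_self, zero_mul] at h3
    have hba : b - a ≠ 0 := sub_ne_zero.mpr (Ne.symm hab)
    rcases mul_eq_zero.mp h3.symm with hh | hh
    · exact hba hh
    · linarith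
  set f : Fin n → ℝ := fun x => if η x = a ∨ η x = b then c else η x with hf
  refine ⟨f, ⟨xa, hxa1, ?_⟩, ?_, ⟨1/2, ?_⟩⟩
  · simp only [hf, hxa2]
    simp [hca]
  · -- Calibrated
    intro x hμx
    by_cases hfx : f x = c
    · rw [hfx]
      set L : Finset (Fin n) := univ.filter (fun y => f y = c) with hL
      have hxL : x ∈ L := by simp [hL, hfx]
      have hLS : L.filter (fun y => η y = a ∨ η y = b) = S := by
        ext y
        simp only [Finset.mem_filter, hL, hS, Finset.mem_univ, true_and]
        constructor
        · exact fun h => h.2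
        · intro h; exact ⟨by simp [hf, h], h⟩
      have hsum0 : ∑ y ∈ L, μ y * (η y - c) = 0 := by
        rw [← Finset.sum_filter_add_sum_filter_not L (fun y => η y = a ∨ η y = b), hLS]
        have h1 : ∑ y ∈ S, μ y * (η y - c) = 0 := by
          have : ∀ y ∈ S, μ y * (η y - c) = μ y * η y - c * μ y := fun y _ => by ring
          rw [Finset.sum_congr rfl this, Finset.sum_sub_distrib, hcm, ← Finset.mul_sum, ← hmdef]
          ring
        have h2 : ∑ y ∈ L.filter (fun y => ¬(η y = a ∨ η y = b)), μ y * (η y - c) = 0 :=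
          Finset.sum_eq_zero (by
            intro y hy
            simp only [Finset.mem_filter, hL, Finset.mem_univ, true_and] at hy
            have : η y = c := by
              have := hy.1
              rw [hf] at this
              simpa [hy.2] using this
            rw [this]; ring)
        rw [h1, h2, add_zero]
      have hLsum : ∑ y ∈ L, μ y * η y = c * ∑ y ∈ L, μ y := by
        have : ∀ y ∈ L, μ y * η y = μ y * (η y - c) + c * μ y := fun y _ => by ring
        rw [Finset.sum_congr rfl this, Finset.sum_add_distrib, hsum0, zero_add,
          ← Finset.mul_sum]
      have hLm : 0 < ∑ y ∈ L, μ y := by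
        have h1 := Finset.single_le_sum (f := μ) (fun i _ => hμ0 i) hxL
        linarith
      rw [lavg, lmass]
      rw [hLsum]
      exact (mul_div_cancel_right₀ c hLm.ne').symm
    · -- f x = η x ≠ c
      have hxnS : ¬(η x = a ∨ η x = b) := by
        intro h
        exact hfx (by simp [hf, h])
      have hfx2 : f x = η x := by simp [hf, hxnS]
      set r : ℝ := f x with hr
      have hηy : ∀ y ∈ univ.filter (fun y => f y = r), η y = r := by
        intro y hy
        simp only [Finset.mem_filter, Finset.mem_univ, true_and] at hy
        by_cases hyS : η y = a ∨ η y = b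
        · exfalso
          apply hfx
          rw [← hy]
          simp [hf, hyS]
        · rw [← hy]; simp [hf, hyS]
      have hLsum : ∑ y ∈ univ.filter (fun y => f y = r), μ y * η y
          = r * ∑ y ∈ univ.filter (fun y => f y = r), μ y := by
        rw [Finset.mul_sum]
        apply Finset.sum_congr rfl
        intro y hy
        rw [hηy y hy]; ring
      have hxL : x ∈ univ.filter (fun y => f y = r) := by simp [hr]
      have hLm : 0 < ∑ y ∈ univ.filter (fun y => f y = r), μ y := by
        have h1 := Finset.single_le_sum (f := μ) (fun i _ => hμ0 i) hxL
        linarith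
      rw [lavg, lmass, hLsum]
      field_simp
  · -- threshold optimality at θ = 1/2
    intro h
    apply Finset.sum_le_sum
    intro x _
    have hηx := hη x
    simp only [Set.mem_Icc] at hηx
    by_cases hth : (1:ℝ)/2 ≤ f x
    · have hη2 : (1:ℝ)/2 ≤ η x := by
        by_cases hxS : η x = a ∨ η x = b
        · exfalso
          have : f x = c := by simp [hf, hxS]
          rw [this] at hth; linarith
        · have : f x = η x := by simp [hf, hxS]
          rwa [this] at hth
      simp only [thresh, hth, decide_true]
      cases hhx : h x
      · simp only [Bool.false_eq_true, if_false, if_true]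
        exact mul_le_mul_of_nonneg_left (by linarith) (hμ0 x)
      · simp
    · have hη2 : η x < 1/2 := by
        by_cases hxS : η x = a ∨ η x = b
        · rcases hxS with hh | hh <;> rw [hh] <;> [exact ha; exact hb]
        · have : f x = η x := by simp [hf, hxS]
          rw [← this]; linarith
      simp only [thresh, hth, decide_false]
      cases hhx : h x
      · simp
      · simp only [if_true, Bool.false_eq_true, if_false]
        exact mul_le_mul_of_nonneg_left (by linarith) (hμ0 x)
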